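/- For every even m ≥ 2, the graph K_{2m} ∪ K_{m,m−1,m−1} on 5m−2 vertices and its complement both fail to contain the kipas K̂_{2m+1} = K_1 + P_{2m} as a subgraph; hence R(K̂_{2m+1}, K̂_{2m+1}) ≥ 5m − 1 for even m. -/

import Mathlib

open SimpleGraph

/-- `H` is contained in `G` as a subgraph. -/
def Contains {α β : Type*} (G : SimpleGraph α) (H : SimpleGraph β) : Prop :=
  ∃ f : H →g G, Function.Injective f

/-- Every red/blue coloring of `K_N` (red = `C`, blue = `Cᶜ`) has a red `G` or blue `H`. -/
def RamseyProp {α β : Type*} (N : ℕ) (G : SimpleGraph α) (H : SimpleGraph β) : Prop :=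
  ∀ C : SimpleGraph (Fin N), Contains C G ∨ Contains Cᶜ H

/-- The Ramsey number `R(G, H)`. -/
noncomputable def ramseyNumber {α β : Type*} (G : SimpleGraph α) (H : SimpleGraph β) : ℕ :=
  sInf {N | RamseyProp N G H}

/-- The join `G + H`: disjoint union plus all edges in between. -/
def graphJoin {α β : Type*} (G : SimpleGraph α) (H : SimpleGraph β) : SimpleGraph (α ⊕ β) :=
  SimpleGraph.fromRel (fun x y =>
    match x, y with
    | Sum.inl a, Sum.inl b => G.Adj a b
    | Sum.inr a, Sum.inr b => H.Adj a b
    | _, _ => True)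

/-- The wheel `W_n = K_1 + C_{n-1}` on `n` vertices. -/
def wheel (n : ℕ) : SimpleGraph (Fin 1 ⊕ Fin (n - 1)) :=
  graphJoin ⊥ (SimpleGraph.cycleGraph (n - 1))

/-- A perfect matching `k • K_2` on `2k` vertices. -/
def matching (k : ℕ) : SimpleGraph (Fin k × Fin 2) :=
  SimpleGraph.fromRel (fun x y => x.1 = y.1)

/-- The fan `F_k = K_1 + k • K_2`. -/
def fan (k : ℕ) : SimpleGraph (Fin 1 ⊕ Fin k × Fin 2) :=
  graphJoin ⊥ (matching k)

/-- The kipas `K̂_n = K_1 + P_{n-1}` on `n` vertices. -/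
def kipas (n : ℕ) : SimpleGraph (Fin 1 ⊕ Fin (n - 1)) :=
  graphJoin ⊥ (SimpleGraph.pathGraph (n - 1))

/-- The blow-up `G[K_2]`: each vertex replaced by an adjacent pair; vertices in
different pairs adjacent iff the original vertices are adjacent. -/
def blowUp {α : Type*} (G : SimpleGraph α) : SimpleGraph (α × Fin 2) :=
  SimpleGraph.fromRel (fun x y => x.1 = y.1 ∨ G.Adj x.1 y.1)


/-- The disjoint union of two graphs. -/
def disjUnion {α β : Type*} (G : SimpleGraph α) (H : SimpleGraph β) :
    SimpleGraph (α ⊕ β) :=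
  SimpleGraph.fromRel (fun x y =>
    match x, y with
    | Sum.inl a, Sum.inl b => G.Adj a b
    | Sum.inr a, Sum.inr b => H.Adj a b
    | _, _ => False)

/-- The graph K_{2m} ∪ K_{m,m-1,m-1}. -/
def G13 (m : ℕ) : SimpleGraph (Fin (2 * m) ⊕ (Σ i : Fin 3, Fin (![m, m - 1, m - 1] i))) :=
  disjUnion (⊤ : SimpleGraph (Fin (2 * m)))
    (completeMultipartiteGraph (fun i : Fin 3 => Fin (![m, m - 1, m - 1] i)))


open Finset in
open Classical in
lemma ramsey_clique : ∀ (k s t : ℕ), s + t ≤ k → ∃ N : ℕ, ∀ (V : Type) (C : SimpleGraph V)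
    (A : Finset V), N ≤ A.card →
    (∃ B ⊆ A, C.IsNClique s B) ∨ (∃ B ⊆ A, Cᶜ.IsNClique t B) := by
  intro k
  induction k with
  | zero =>
    intro s t hst
    refine ⟨0, fun V C A _ => Or.inl ⟨∅, Finset.empty_subset _, ?_⟩⟩
    simp [Nat.le_zero.mp (le_trans (Nat.le_add_right s t) hst)]
  | succ k ih =>
    intro s t hst
    match s, t with
    | 0, t => exact ⟨0, fun V C A _ => Or.inl ⟨∅, Finset.empty_subset _, by simp⟩⟩
    | s+1, 0 => exact ⟨0, fun V C A _ => Or.inr ⟨∅, Finset.empty_subset _, by simp⟩⟩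
    | s+1, t+1 =>
      obtain ⟨N₁, h₁⟩ := ih s (t+1) (by omega)
      obtain ⟨N₂, h₂⟩ := ih (s+1) t (by omega)
      refine ⟨N₁ + N₂ + 1, fun V C A hA => ?_⟩
      obtain ⟨v, hv⟩ : A.Nonempty := Finset.card_pos.mp (by omega)
      set X := (A.erase v).filter (fun y => C.Adj v y) with hX
      set Y := (A.erase v).filter (fun y => ¬ C.Adj v y) with hY
      have hcard : X.card + Y.card = (A.erase v).card := by
        rw [hX, hY]
        exact Finset.card_filter_add_card_filter_not _
      have hAe : (A.erase v).card = A.card - 1 := Finset.card_erase_of_mem hv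
      have hXA : X ⊆ A := (Finset.filter_subset _ _).trans (Finset.erase_subset _ _)
      have hYA : Y ⊆ A := (Finset.filter_subset _ _).trans (Finset.erase_subset _ _)
      have : N₁ ≤ X.card ∨ N₂ ≤ Y.card := by omega
      rcases this with hc | hc
      · rcases h₁ V C X hc with ⟨B, hBX, hB⟩ | ⟨B, hBX, hB⟩
        · refine Or.inl ⟨insert v B, ?_, hB.insert fun b hb => ?_⟩
          · exact Finset.insert_subset hv (hBX.trans hXA)
          · exact (Finset.mem_filter.mp (hBX hb)).2
        · exact Or.inr ⟨B, hBX.trans hXA, hB⟩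
      · rcases h₂ V C Y hc with ⟨B, hBY, hB⟩ | ⟨B, hBY, hB⟩
        · exact Or.inl ⟨B, hBY.trans hYA, hB⟩
        · refine Or.inr ⟨insert v B, Finset.insert_subset hv (hBY.trans hYA), hB.insert
            fun b hb => ?_⟩
          have hmem := Finset.mem_filter.mp (hBY hb)
          exact (compl_adj C v b).mpr ⟨(Finset.ne_of_mem_erase (Finset.mem_of_mem_filter b
            (by exact hBY hb))).symm ∘ Eq.symm ∘ (fun h => h) ∘ id ∘ congrArg id ∘ Eq.symm, hmem.2⟩

-- basic adjacency lemmas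
lemma kipas_adj_hub (n : ℕ) (j : Fin (n - 1)) : (kipas n).Adj (Sum.inl 0) (Sum.inr j) := by
  simp [kipas, graphJoin, SimpleGraph.fromRel_adj]

lemma kipas_adj_path (n : ℕ) (j j' : Fin (n - 1)) (h : (SimpleGraph.pathGraph (n-1)).Adj j j') :
    (kipas n).Adj (Sum.inr j) (Sum.inr j') := by
  simp only [kipas, graphJoin, SimpleGraph.fromRel_adj]
  exact ⟨by simp [h.ne], Or.inl h⟩

lemma G13_adj_ll (m : ℕ) (a b : Fin (2*m)) : (G13 m).Adj (Sum.inl a) (Sum.inl b) ↔ a ≠ b := by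
  constructor
  · intro h; intro hab; subst hab; exact (G13 m).loopless.irrefl _ h
  · intro h
    simp only [G13, disjUnion, SimpleGraph.fromRel_adj]
    exact ⟨by simp [h], Or.inl (by simp [h])⟩

lemma G13_not_adj_lr (m : ℕ) (a : Fin (2*m)) c :
    ¬ (G13 m).Adj (Sum.inl a) (Sum.inr c) := by
  simp [G13, disjUnion, SimpleGraph.fromRel_adj]

lemma G13_adj_rr (m : ℕ) (c d : Σ i : Fin 3, Fin (![m, m - 1, m - 1] i)) :
    (G13 m).Adj (Sum.inr c) (Sum.inr d) ↔ c.1 ≠ d.1 := by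
  constructor
  · intro h
    simp only [G13, disjUnion, SimpleGraph.fromRel_adj] at h
    rcases h.2 with h' | h'
    · exact h'
    · exact h'.symm
  · intro h
    simp only [G13, disjUnion, SimpleGraph.fromRel_adj]
    refine ⟨?_, Or.inl h⟩
    simp only [ne_eq, Sum.inr.injEq]
    exact fun he => h (congrArg Sigma.fst he)

def fiberEquiv (m : ℕ) (i0 : Fin 3) :
    {p : Σ i : Fin 3, Fin (![m,m-1,m-1] i) // p.1 = i0} ≃ Fin (![m,m-1,m-1] i0) where
  toFun p := Fin.cast (congrArg _ p.2) p.1.2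
  invFun x := ⟨⟨i0, x⟩, rfl⟩
  left_inv := by rintro ⟨⟨i, x⟩, rfl⟩; rfl
  right_inv x := rfl

lemma card_total (m : ℕ) (hm : 2 ≤ m) :
    Fintype.card (Σ i : Fin 3, Fin (![m,m-1,m-1] i)) = 3*m - 2 := by
  simp only [Fintype.card_sigma, Fin.sum_univ_three, Fintype.card_fin]
  simp only [Matrix.cons_val_zero, Matrix.cons_val_one, Matrix.head_cons,
    Matrix.cons_val_two, Matrix.tail_cons]
  omega

lemma sz_lb (m : ℕ) (hm : 2 ≤ m) (i0 : Fin 3) : m - 1 ≤ ![m,m-1,m-1] i0 := by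
  fin_cases i0 <;> simp <;> omega

lemma sz_ub (m : ℕ) (hm : 2 ≤ m) (i0 : Fin 3) : ![m,m-1,m-1] i0 ≤ m := by
  fin_cases i0 <;> simp <;> omega

lemma card_fiber (m : ℕ) (i0 : Fin 3) :
    Fintype.card {p : Σ i : Fin 3, Fin (![m,m-1,m-1] i) // p.1 = i0} = ![m,m-1,m-1] i0 :=
  (Fintype.card_congr (fiberEquiv m i0)).trans (Fintype.card_fin _)

lemma card_offpart (m : ℕ) (hm : 2 ≤ m) (i0 : Fin 3) :
    Fintype.card {p : Σ i : Fin 3, Fin (![m,m-1,m-1] i) // p.1 ≠ i0} ≤ 2*m - 1 := by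
  classical
  have h0 : Fintype.card {p : Σ i : Fin 3, Fin (![m,m-1,m-1] i) // p.1 ≠ i0}
      = Fintype.card {p : Σ i : Fin 3, Fin (![m,m-1,m-1] i) // ¬ p.1 = i0} :=
    Fintype.card_congr (Equiv.subtypeEquivRight (fun _ => Iff.rfl))
  rw [h0, Fintype.card_subtype_compl, card_fiber, card_total m hm]
  have := sz_lb m hm i0
  omega

lemma part1 (m : ℕ) (hm : 2 ≤ m) : ¬ Contains (G13 m) (kipas (2*m+1)) := by
  classical
  rintro ⟨f, hf⟩
  have hadj : ∀ j : Fin (2*m+1-1), (G13 m).Adj (f (Sum.inl 0)) (f (Sum.inr j)) :=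
    fun j => f.map_adj (kipas_adj_hub _ j)
  have hcardJ : Fintype.card (Fin (2*m+1-1)) = 2*m := by simp
  cases hveq : f (Sum.inl 0) with
  | inl a =>
    have hb : ∀ j : Fin (2*m+1-1), ∃ b : Fin (2*m),
        f (Sum.inr j) = Sum.inl b ∧ b ≠ a := by
      intro j
      have h := hadj j; rw [hveq] at h
      cases hw : f (Sum.inr j) with
      | inl b =>
        rw [hw] at h
        exact ⟨b, rfl, fun hba => ((G13_adj_ll m a b).mp h) hba.symm⟩
      | inr c => rw [hw] at h; exact absurd h (G13_not_adj_lr m a c)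
    choose b hb1 hb2 using hb
    have hinj : Function.Injective
        (fun j => (⟨b j, hb2 j⟩ : {x : Fin (2*m) // x ≠ a})) := by
      intro j j' h
      have hbb : b j = b j' := congrArg Subtype.val h
      have : f (Sum.inr j) = f (Sum.inr j') := by rw [hb1, hb1, hbb]
      exact Sum.inr.inj (hf this)
    have hcard := Fintype.card_le_of_injective _ hinj
    have h1 : Fintype.card {x : Fin (2*m) // x ≠ a}
        = Fintype.card {x : Fin (2*m) // ¬ x = a} :=
      Fintype.card_congr (Equiv.subtypeEquivRight (fun _ => Iff.rfl))
    rw [hcardJ, h1, Fintype.card_subtype_compl, Fintype.card_subtype_eq,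
      Fintype.card_fin] at hcard
    omega
  | inr c =>
    have hd : ∀ j : Fin (2*m+1-1), ∃ d : Σ i : Fin 3, Fin (![m,m-1,m-1] i),
        f (Sum.inr j) = Sum.inr d ∧ d.1 ≠ c.1 := by
      intro j
      have h := hadj j; rw [hveq] at h
      cases hw : f (Sum.inr j) with
      | inl b => rw [hw] at h; exact absurd h.symm (G13_not_adj_lr m b c)
      | inr d =>
        rw [hw] at h
        exact ⟨d, rfl, fun hdc => ((G13_adj_rr m c d).mp h) hdc.symm⟩
    choose d hd1 hd2 using hd
    have hinj : Function.Injective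
        (fun j => (⟨d j, hd2 j⟩ :
          {p : Σ i : Fin 3, Fin (![m,m-1,m-1] i) // p.1 ≠ c.1})) := by
      intro j j' h
      have hdd : d j = d j' := congrArg Subtype.val h
      have : f (Sum.inr j) = f (Sum.inr j') := by rw [hd1, hd1, hdd]
      exact Sum.inr.inj (hf this)
    have hcard := Fintype.card_le_of_injective _ hinj
    have h2 := card_offpart m hm c.1
    rw [hcardJ] at hcard
    omega

lemma sigma_ext' {m : ℕ} (p q : Σ i : Fin 3, Fin (![m,m-1,m-1] i))
    (h1 : p.1 = q.1) (h2 : p.2.val = q.2.val) : p = q := by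
  obtain ⟨i, x⟩ := p; obtain ⟨i', y⟩ := q
  dsimp at h1 h2
  subst h1
  rw [Fin.ext h2]

lemma G13c_not_ll (m : ℕ) (a b : Fin (2*m)) : ¬ (G13 m)ᶜ.Adj (Sum.inl a) (Sum.inl b) := by
  rw [SimpleGraph.compl_adj]
  rintro ⟨hne, hnadj⟩
  exact hnadj ((G13_adj_ll m a b).mpr (fun h => hne (congrArg Sum.inl h)))

lemma G13c_rr (m : ℕ) (c d : Σ i : Fin 3, Fin (![m,m-1,m-1] i)) :
    (G13 m)ᶜ.Adj (Sum.inr c) (Sum.inr d) ↔ c ≠ d ∧ c.1 = d.1 := by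
  rw [SimpleGraph.compl_adj, G13_adj_rr]
  constructor
  · rintro ⟨hne, h⟩
    exact ⟨fun hcd => hne (congrArg Sum.inr hcd), not_not.mp h⟩
  · rintro ⟨hne, h⟩
    exact ⟨fun hcd => hne (Sum.inr.inj hcd), fun h' => h' h⟩

lemma part2 (m : ℕ) (hm : 2 ≤ m) : ¬ Contains (G13 m)ᶜ (kipas (2*m+1)) := by
  classical
  rintro ⟨f, hf⟩
  have hadj : ∀ j : Fin (2*m+1-1), (G13 m)ᶜ.Adj (f (Sum.inl 0)) (f (Sum.inr j)) :=
    fun j => f.map_adj (kipas_adj_hub _ j)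
  have hpath : ∀ j j' : Fin (2*m+1-1), j.val + 1 = j'.val →
      (G13 m)ᶜ.Adj (f (Sum.inr j)) (f (Sum.inr j')) := fun j j' h =>
    f.map_adj (kipas_adj_path _ _ _ (SimpleGraph.pathGraph_adj.mpr (Or.inl h)))
  have hcardJ : Fintype.card (Fin (2*m+1-1)) = 2*m := by simp
  cases hveq : f (Sum.inl 0) with
  | inl a =>
    have hc : ∀ j : Fin (2*m+1-1), ∃ c, f (Sum.inr j) = Sum.inr c := by
      intro j
      have h := hadj j; rw [hveq] at h
      cases hw : f (Sum.inr j) with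
      | inl b => rw [hw] at h; exact absurd h (G13c_not_ll m a b)
      | inr c => exact ⟨c, rfl⟩
    choose c hc using hc
    have hsame : ∀ j j' : Fin (2*m+1-1), j.val + 1 = j'.val → (c j).1 = (c j').1 := by
      intro j j' h
      have := hpath j j' h
      rw [hc j, hc j'] at this
      exact ((G13c_rr m _ _).mp this).2
    have h0lt : 0 < 2*m+1-1 := by omega
    have hall : ∀ j : Fin (2*m+1-1), (c j).1 = (c ⟨0, h0lt⟩).1 := by
      have key : ∀ k (h : k < 2*m+1-1), (c ⟨k, h⟩).1 = (c ⟨0, h0lt⟩).1 := by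
        intro k
        induction k with
        | zero => intro h; rfl
        | succ k ih =>
          intro h
          have hk : k < 2*m+1-1 := by omega
          exact (hsame ⟨k, hk⟩ ⟨k+1, h⟩ rfl).symm.trans (ih hk)
      intro j
      have : j = ⟨j.val, j.isLt⟩ := rfl
      rw [this]; exact key j.val j.isLt
    set i0 := (c ⟨0, h0lt⟩).1 with hi0
    have hinj : Function.Injective
        (fun j => Fin.cast (congrArg (fun i => ![m,m-1,m-1] i) (hall j)) (c j).2) := by
      intro j j' h
      have hval : (c j).2.val = (c j').2.val := by
        have := congrArg Fin.val h
        simpa using this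
      have hcc : c j = c j' := sigma_ext' _ _ ((hall j).trans (hall j').symm) hval
      have : f (Sum.inr j) = f (Sum.inr j') := by rw [hc, hc, hcc]
      exact Sum.inr.inj (hf this)
    have hcard := Fintype.card_le_of_injective _ hinj
    have hbe : Fintype.card (Fin ((fun i => ![m,m-1,m-1] i) i0)) = ![m,m-1,m-1] i0 :=
      Fintype.card_fin _
    rw [hcardJ, hbe] at hcard
    have := sz_ub m hm i0
    omega
  | inr c0 =>
    set S : Finset (Fin (2*m+1-1)) :=
      Finset.univ.filter (fun j => (f (Sum.inr j)).isLeft) with hS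
    have hright : ∀ j : Fin (2*m+1-1), ∃ cj : Σ i : Fin 3, Fin (![m,m-1,m-1] i),
        (¬ (f (Sum.inr j)).isLeft →
          f (Sum.inr j) = Sum.inr cj ∧ cj.1 = c0.1 ∧ cj ≠ c0) := by
      intro j
      cases hw : f (Sum.inr j) with
      | inl b => exact ⟨c0, fun h => absurd rfl h⟩
      | inr cj =>
        refine ⟨cj, fun _ => ⟨rfl, ?_, ?_⟩⟩
        · have h := hadj j; rw [hveq, hw] at h
          exact ((G13c_rr m _ _).mp h).2.symm
        · intro hcc
          have h := hadj j; rw [hveq, hw, hcc] at h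
          exact (G13 m)ᶜ.loopless.irrefl _ h
    choose c hcspec using hright
    -- no two consecutive elements of S
    have hScons : ∀ j j' : Fin (2*m+1-1), j.val + 1 = j'.val → j ∈ S → j' ∈ S → False := by
      intro j j' h hj hj'
      rw [hS, Finset.mem_filter] at hj hj'
      obtain ⟨b, hb⟩ := Sum.isLeft_iff.mp hj.2
      obtain ⟨b', hb'⟩ := Sum.isLeft_iff.mp hj'.2
      have := hpath j j' h
      rw [hb, hb'] at this
      exact G13c_not_ll m b b' this
    -- S.card ≤ m
    have hSm : S.card ≤ m := by
      have := Finset.card_le_card_of_injOn (fun j => j.val / 2)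
        (fun j _ => Finset.mem_range.mpr (show j.val / 2 < m by have := j.isLt; omega)) (s := S)
        (t := Finset.range m) ?_
      · simpa using this
      · intro j hj j' hj' h
        by_contra hne
        have hvne : j.val ≠ j'.val := fun hv => hne (Fin.ext hv)
        have : j.val + 1 = j'.val ∨ j'.val + 1 = j.val := by
          simp only at h; omega
        rcases this with h' | h'
        · exact hScons j j' h' hj hj'
        · exact hScons j' j h' hj' hj
    -- Sᶜ.card ≤ m - 1
    have hTm : Sᶜ.card ≤ m - 1 := by
      have hmem : ∀ j ∈ Sᶜ, (c j).2.val ∈ (Finset.range (![m,m-1,m-1] c0.1)).erase c0.2.val := by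
        intro j hj
        have hnl : ¬ (f (Sum.inr j)).isLeft := by
          rw [Finset.mem_compl, hS, Finset.mem_filter] at hj
          exact fun h => hj ⟨Finset.mem_univ _, h⟩
        obtain ⟨heq, hfst, hne⟩ := hcspec j hnl
        refine Finset.mem_erase.mpr ⟨?_, Finset.mem_range.mpr ?_⟩
        · exact fun hv => hne (sigma_ext' _ _ hfst hv)
        · have h1 := (c j).2.isLt
          have h2 : (![m,m-1,m-1] (c j).fst) = ![m,m-1,m-1] c0.fst := congrArg _ hfst
          omega
      have hinj : Set.InjOn (fun j => (c j).2.val) ↑(Sᶜ) := by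
        intro j hj j' hj' h
        have hj1 := Finset.mem_compl.mp (Finset.mem_coe.mp hj)
        have hj1' := Finset.mem_compl.mp (Finset.mem_coe.mp hj')
        have hnl : ¬ (f (Sum.inr j)).isLeft :=
          fun hh => hj1 (Finset.mem_filter.mpr ⟨Finset.mem_univ _, hh⟩)
        have hnl' : ¬ (f (Sum.inr j')).isLeft :=
          fun hh => hj1' (Finset.mem_filter.mpr ⟨Finset.mem_univ _, hh⟩)
        obtain ⟨heq, hfst, _⟩ := hcspec j hnl
        obtain ⟨heq', hfst', _⟩ := hcspec j' hnl'
        have hcc : c j = c j' := sigma_ext' _ _ (hfst.trans hfst'.symm) h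
        have : f (Sum.inr j) = f (Sum.inr j') := by rw [heq, heq', hcc]
        exact Sum.inr.inj (hf this)
      have := Finset.card_le_card_of_injOn _ hmem hinj
      rw [Finset.card_erase_of_mem (Finset.mem_range.mpr c0.2.isLt),
        Finset.card_range] at this
      have := sz_ub m hm c0.1
      omega
    have hsum : S.card + Sᶜ.card = 2*m := by
      rw [Finset.card_add_card_compl, hcardJ]
    omega

lemma contains_of_clique {β V : Type*} [Fintype β] (H : SimpleGraph β) (C : SimpleGraph V)
    (B : Finset V) (h : C.IsNClique (Fintype.card β) B) : Contains C H := by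
  classical
  have hcard : Fintype.card β = Fintype.card B := by
    rw [Fintype.card_coe, h.2]
  let e := Fintype.equivOfCardEq hcard
  refine ⟨⟨fun x => (e x : V), ?_⟩, ?_⟩
  · intro x y hxy
    exact h.1 (Finset.mem_coe.mpr (e x).2) (Finset.mem_coe.mpr (e y).2)
      (fun hv => hxy.ne (e.injective (Subtype.ext hv)))
  · intro x y hxy
    exact e.injective (Subtype.ext hxy)

lemma exists_ramseyProp {β : Type*} [Fintype β] (H : SimpleGraph β) :
    ∃ N, RamseyProp N H H := by
  obtain ⟨N, hN⟩ := ramsey_clique (2 * Fintype.card β) (Fintype.card β) (Fintype.card β)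
    (by omega)
  refine ⟨N, fun C => ?_⟩
  rcases hN (Fin N) C Finset.univ (le_of_eq (by simp)) with ⟨B, _, hB⟩ | ⟨B, _, hB⟩
  · exact Or.inl (contains_of_clique H C B hB)
  · exact Or.inr (contains_of_clique H Cᶜ B hB)

theorem stmt_13 (m : ℕ) (hm : 2 ≤ m) (he : Even m) :
    ¬ Contains (G13 m) (kipas (2 * m + 1)) ∧
    ¬ Contains (G13 m)ᶜ (kipas (2 * m + 1)) ∧
    5 * m - 1 ≤ ramseyNumber (kipas (2 * m + 1)) (kipas (2 * m + 1)) := by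
  classical
  refine ⟨part1 m hm, part2 m hm, ?_⟩
  obtain ⟨N0, hN0⟩ := exists_ramseyProp (kipas (2*m+1))
  refine le_csInf ⟨N0, hN0⟩ ?_
  intro N hN
  by_contra hlt
  push_neg at hlt
  have hNle : N ≤ 5*m-2 := by omega
  have hcardV : Fintype.card (Fin (5*m-2))
      = Fintype.card (Fin (2*m) ⊕ Σ i : Fin 3, Fin (![m,m-1,m-1] i)) := by
    rw [Fintype.card_sum, Fintype.card_fin, Fintype.card_fin, card_total m hm]
    omega
  let e := Fintype.equivOfCardEq hcardV
  let ι : Fin N → Fin (5*m-2) := Fin.castLE hNle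
  have hιinj : Function.Injective (fun x => e (ι x)) :=
    fun x y h => Fin.castLE_injective hNle (e.injective h)
  let C : SimpleGraph (Fin N) := (G13 m).comap (fun x => e (ι x))
  rcases hN C with ⟨f, hf⟩ | ⟨f, hf⟩
  · refine part1 m hm ⟨⟨fun x => e (ι (f x)), ?_⟩, ?_⟩
    · intro x y hxy
      exact f.map_adj hxy
    · intro x y h
      exact hf (hιinj h)
  · refine part2 m hm ⟨⟨fun x => e (ι (f x)), ?_⟩, ?_⟩
    · intro x y hxy
      have h := f.map_adj hxy
      rw [SimpleGraph.compl_adj] at h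
      rw [SimpleGraph.compl_adj]
      exact ⟨fun hv => h.1 (hιinj hv), fun ha => h.2 ha⟩
    · intro x y h
      exact hf (hιinj h)
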